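/- Every compatible relation R : 𝒜 → ℬ factors as an epimorphism followed by a monomorphism: with 𝒫 = pol(R) = (A⁻, B⁺; R), the same relation R is compatible as a morphism 𝒜 → 𝒫 and as a morphism 𝒫 → ℬ, the first is epi, the second is mono, and R = R ⨟_𝒫 R. -/
import Mathlib


def down {A B : Type*} (R : A → B → Prop) (Y : Set B) : Set A := {a | ∀ b ∈ Y, R a b}
def up {A B : Type*} (R : A → B → Prop) (X : Set A) : Set B := {b | ∀ a ∈ X, R a b}
def bracket {A B : Type*} (f : Set B → Set A) : A → B → Prop := fun a b => a ∈ f {b}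
def Compat {Am Ap Bm Bp : Type*} (A : Am → Ap → Prop) (B : Bm → Bp → Prop)
    (R : Am → Bp → Prop) : Prop :=
  (∀ Y : Set Bp, down A (up A (down R Y)) = down R Y) ∧
  (∀ Y : Set Bp, down R (up B (down B Y)) = down R Y)
def comp {Am Bm Bp Cp : Type*} (R : Am → Bp → Prop) (B : Bm → Bp → Prop)
    (S : Bm → Cp → Prop) : Am → Cp → Prop :=
  fun a c => a ∈ down R (up B (down S {c}))


lemma galois {A B : Type*} (R : A → B → Prop) (Y : Set B) :
    down R (up R (down R Y)) = down R Y := by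
  ext a
  constructor
  · intro h b hb
    exact h b (fun a' ha' => ha' b hb)
  · intro h b hb
    exact hb a h

lemma down_singleton {A B : Type*} (R : A → B → Prop) (c : B) :
    down R {c} = {a | R a c} := by
  ext a; simp [down]

universe u
theorem stmt16 {Am Ap Bm Bp : Type u} (A : Am → Ap → Prop) (B : Bm → Bp → Prop)
    (R : Am → Bp → Prop) (hR : Compat A B R) :
    Compat A R R ∧ Compat R B R ∧
    (∀ (Zm Zp : Type u) (Z : Zm → Zp → Prop) (P Q : Am → Zp → Prop),
      Compat R Z P → Compat R Z Q → comp R R P = comp R R Q → P = Q) ∧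
    (∀ (Zm Zp : Type u) (Z : Zm → Zp → Prop) (P Q : Zm → Bp → Prop),
      Compat Z R P → Compat Z R Q → comp P R R = comp Q R R → P = Q) ∧
    comp R R R = R := by
  refine ⟨⟨hR.1, fun Y => galois R Y⟩, ⟨fun Y => galois R Y, hR.2⟩, ?_, ?_, ?_⟩
  · intro Zm Zp Z P Q hP hQ h
    funext a c
    have hP1 := hP.1 {c}
    have hQ1 := hQ.1 {c}
    have := congrFun (congrFun h a) c
    simp only [comp] at this
    rw [hP1, hQ1] at this
    simpa [down_singleton] using this
  · intro Zm Zp Z P Q hP hQ h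
    funext a c
    have hP2 := hP.2 {c}
    have hQ2 := hQ.2 {c}
    have := congrFun (congrFun h a) c
    simp only [comp] at this
    rw [hP2, hQ2] at this
    simpa [down_singleton] using this
  · funext a c
    have := galois R {c}
    simp only [comp]
    rw [this]
    simp [down_singleton]
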